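/- Let X be a real inner product space, V_h⁰ ⊆ X a complete subspace, L a real inner product space, Π : X → L a continuous linear map, ν > 0, α > 0 and f, u^d ∈ L. Call a pair (u_h,q) ∈ V_h⁰ × L feasible if ν⟨u_h,φ_h⟩_X = ⟨f + q, Πφ_h⟩_L for all φ_h ∈ V_h⁰, and define J_Π(v,r) := (1/2)‖Πv − u^d‖_L² + (α/2)‖r‖_L². Then a feasible pair (u_h,q) satisfies J_Π(u_h,q) ≤ J_Π(v,r) for all feasible pairs (v,r) if and only if there exists z_h ∈ V_h⁰ such that q = −α^{-1/2} Πz_h and ν⟨φ_h,z_h⟩_X = α^{-1/2}⟨Πu_h − u^d, Πφ_h⟩_L for all φ_h ∈ V_h⁰. -/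

import Mathlib

open RealInnerProductSpace

/-- Riesz representation on a complete subspace. -/
private lemma riesz_sub {X : Type*} [NormedAddCommGroup X] [InnerProductSpace ℝ X]
    (V : Submodule ℝ X) [CompleteSpace V] (F : X →L[ℝ] ℝ) :
    ∃ z ∈ V, ∀ φ ∈ V, ⟪z, φ⟫ = F φ := by
  let z : V := (InnerProductSpace.toDual ℝ V).symm (F.comp V.subtypeL)
  refine ⟨z, z.2, fun φ hφ => ?_⟩
  have h : (inner ℝ z (⟨φ, hφ⟩ : V) : ℝ) = (F.comp V.subtypeL) ⟨φ, hφ⟩ :=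
    InnerProductSpace.toDual_symm_apply
  rw [Submodule.coe_inner] at h
  exact h

/-- Equivalence of the fully pressure-robust discretized optimal control
problem with its rescaled discrete optimality system. -/
theorem discrete_optimal_iff_kkt
    {X L : Type*} [NormedAddCommGroup X] [InnerProductSpace ℝ X]
    [NormedAddCommGroup L] [InnerProductSpace ℝ L]
    (V : Submodule ℝ X) [CompleteSpace V]
    (Pi : X →L[ℝ] L)
    (ν α : ℝ) (hν : 0 < ν) (hα : 0 < α) (f ud : L)
    (uh : X) (q : L) (huhV : uh ∈ V)
    (hfeas : ∀ φh ∈ V, ν * ⟪uh, φh⟫ = ⟪f + q, Pi φh⟫) :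
    (∀ (v : X) (r : L), v ∈ V → (∀ φh ∈ V, ν * ⟪v, φh⟫ = ⟪f + r, Pi φh⟫) →
        (1 / 2) * ‖Pi uh - ud‖ ^ 2 + (α / 2) * ‖q‖ ^ 2
          ≤ (1 / 2) * ‖Pi v - ud‖ ^ 2 + (α / 2) * ‖r‖ ^ 2)
      ↔ ∃ zh ∈ V, q = -(Real.sqrt α)⁻¹ • Pi zh ∧
          ∀ φh ∈ V, ν * ⟪φh, zh⟫
            = (Real.sqrt α)⁻¹ * ⟪Pi uh - ud, Pi φh⟫ := by
  have hν0 : ν ≠ 0 := hν.ne'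
  set sα := Real.sqrt α with hsαdef
  have hsα0 : 0 < sα := Real.sqrt_pos.mpr hα
  have hsαne : sα ≠ 0 := hsα0.ne'
  have hαs : sα * sα = α := Real.mul_self_sqrt hα.le
  -- cross-term cancellation, for any adjoint solution z and any state difference (w, s)
  have claim : ∀ z ∈ V, (∀ φ ∈ V, ν * ⟪φ, z⟫ = sα⁻¹ * ⟪Pi uh - ud, Pi φ⟫) →
      ∀ w ∈ V, ∀ s : L, (∀ φ ∈ V, ν * ⟪w, φ⟫ = ⟪s, Pi φ⟫) →
        ⟪Pi uh - ud, Pi w⟫ = sα * ⟪s, Pi z⟫ := by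
    intro z hzV hadj w hwV s hws
    have h1 := hadj w hwV
    have h2 := hws z hzV
    have h3 : sα⁻¹ * ⟪Pi uh - ud, Pi w⟫ = ⟪s, Pi z⟫ := by rw [← h1, h2]
    rw [← h3]
    field_simp
  constructor
  · -- optimality ⇒ KKT
    intro hopt
    -- construct the adjoint state
    obtain ⟨zh, hzhV, hzh⟩ := riesz_sub V
      ((ν⁻¹ * sα⁻¹) • ((innerSL ℝ (Pi uh - ud)).comp Pi))
    have hadj : ∀ φ ∈ V, ν * ⟪φ, zh⟫ = sα⁻¹ * ⟪Pi uh - ud, Pi φ⟫ := by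
      intro φ hφ
      have h := hzh φ hφ
      simp only [ContinuousLinearMap.smul_apply, ContinuousLinearMap.comp_apply,
        innerSL_apply_apply, smul_eq_mul] at h
      rw [show (⟪φ, zh⟫ : ℝ) = ⟪zh, φ⟫ from real_inner_comm _ _, h]
      field_simp
    refine ⟨zh, hzhV, ?_, hadj⟩
    -- show the gradient equation by perturbation in an arbitrary direction s
    have hqs : ∀ s : L, ⟪α • q + sα • Pi zh, s⟫ = 0 := by
      intro s
      obtain ⟨w, hwV, hw⟩ := riesz_sub V (ν⁻¹ • ((innerSL ℝ s).comp Pi))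
      have hws : ∀ φ ∈ V, ν * ⟪w, φ⟫ = ⟪s, Pi φ⟫ := by
        intro φ hφ
        have h := hw φ hφ
        simp only [ContinuousLinearMap.smul_apply, ContinuousLinearMap.comp_apply,
          innerSL_apply_apply, smul_eq_mul] at h
        rw [h]
        field_simp
      set A : ℝ := ⟪Pi uh - ud, Pi w⟫ + α * ⟪q, s⟫ with hAdef
      set B : ℝ := (1 / 2) * ‖Pi w‖ ^ 2 + (α / 2) * ‖s‖ ^ 2 with hBdef
      have hB : 0 ≤ B := by
        rw [hBdef]; positivity
      have hts : ∀ t : ℝ, 0 ≤ t * A + t ^ 2 * B := by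
        intro t
        have hfeast : ∀ φ ∈ V, ν * ⟪uh + t • w, φ⟫ = ⟪f + (q + t • s), Pi φ⟫ := by
          intro φ hφ
          have h1 := hfeas φ hφ
          have h2 := hws φ hφ
          simp only [inner_add_left, real_inner_smul_left] at h1 h2 ⊢
          linear_combination h1 + t * h2
        have hle := hopt (uh + t • w) (q + t • s)
          (V.add_mem huhV (V.smul_mem t hwV)) hfeast
        have e1 : ‖Pi (uh + t • w) - ud‖ ^ 2
            = ‖Pi uh - ud‖ ^ 2 + 2 * (t * ⟪Pi uh - ud, Pi w⟫) + t ^ 2 * ‖Pi w‖ ^ 2 := by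
          have hv : Pi (uh + t • w) - ud = (Pi uh - ud) + t • Pi w := by
            rw [map_add, map_smul]; abel
          rw [hv, norm_add_sq_real, real_inner_smul_right, norm_smul]
          simp [mul_pow, sq_abs]
        have e2 : ‖q + t • s‖ ^ 2
            = ‖q‖ ^ 2 + 2 * (t * ⟪q, s⟫) + t ^ 2 * ‖s‖ ^ 2 := by
          rw [norm_add_sq_real, real_inner_smul_right, norm_smul]
          simp [mul_pow, sq_abs]
        rw [e1, e2] at hle
        rw [hAdef, hBdef]
        linarith [hle]
      -- from 0 ≤ t A + t² B for all t, deduce A = 0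
      have hB1 : (0:ℝ) < B + 1 := by linarith
      have hA : A = 0 := by
        have h := hts (-(A / (B + 1)))
        have key : (-(A / (B + 1))) * A + (-(A / (B + 1))) ^ 2 * B
            = -(A ^ 2 / (B + 1) ^ 2) := by
          field_simp
          ring
        rw [key] at h
        have h1 : A ^ 2 / (B + 1) ^ 2 ≤ 0 := by linarith
        have h2 : 0 ≤ A ^ 2 / (B + 1) ^ 2 := by positivity
        have h3 : A ^ 2 / (B + 1) ^ 2 = 0 := le_antisymm h1 h2
        have h4 : A ^ 2 = 0 := by
          rcases div_eq_zero_iff.mp h3 with h | h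
          · exact h
          · exact absurd h (by positivity)
        exact pow_eq_zero_iff (n := 2) (by norm_num) |>.mp h4
      have hX := claim zh hzhV hadj w hwV s hws
      rw [hAdef, hX] at hA
      simp only [inner_add_left, real_inner_smul_left]
      have hc : (⟪Pi zh, s⟫ : ℝ) = ⟪s, Pi zh⟫ := real_inner_comm _ _
      linear_combination hA + sα * hc
    have h0 : α • q + sα • Pi zh = 0 := by
      have := hqs (α • q + sα • Pi zh)
      rwa [real_inner_self_eq_norm_sq, sq_eq_zero_iff, norm_eq_zero] at this
    have hq' : α • q = -(sα • Pi zh) := eq_neg_of_add_eq_zero_left h0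
    have hinv : α⁻¹ * sα = sα⁻¹ := by
      rw [← hαs]
      field_simp
    have := congrArg (fun x : L => α⁻¹ • x) hq'
    simp only [smul_smul, inv_mul_cancel₀ hα.ne', one_smul, smul_neg, hinv] at this
    rw [this, neg_smul]
  · -- KKT ⇒ optimality
    rintro ⟨z, hzV, hq, hadjz⟩ v r hvV hfr
    have hwV : v - uh ∈ V := V.sub_mem hvV huhV
    have hws : ∀ φ ∈ V, ν * ⟪v - uh, φ⟫ = ⟪r - q, Pi φ⟫ := by
      intro φ hφ
      have h1 := hfr φ hφ
      have h2 := hfeas φ hφ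
      simp only [inner_add_left] at h1 h2
      simp only [inner_sub_left, mul_sub]
      linarith
    have hX := claim z hzV hadjz (v - uh) hwV (r - q) hws
    have hqinner : ⟪q, r - q⟫ = -(sα⁻¹ * ⟪Pi z, r - q⟫) := by
      rw [hq]
      simp [real_inner_smul_left]
    have hA : ⟪Pi uh - ud, Pi (v - uh)⟫ + α * ⟪q, r - q⟫ = 0 := by
      rw [hX, hqinner]
      have hc : (⟪r - q, Pi z⟫ : ℝ) = ⟪Pi z, r - q⟫ := real_inner_comm _ _
      have hαsα : α * sα⁻¹ = sα := by
        rw [← hαs]; field_simp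
      rw [hc]
      linear_combination (-(⟪Pi z, r - q⟫ : ℝ)) * hαsα
    have e1 : ‖Pi v - ud‖ ^ 2
        = ‖Pi uh - ud‖ ^ 2 + 2 * ⟪Pi uh - ud, Pi (v - uh)⟫ + ‖Pi (v - uh)‖ ^ 2 := by
      have hv : Pi v - ud = (Pi uh - ud) + Pi (v - uh) := by
        rw [map_sub]; abel
      rw [hv, norm_add_sq_real]
    have e2 : ‖r‖ ^ 2 = ‖q‖ ^ 2 + 2 * ⟪q, r - q⟫ + ‖r - q‖ ^ 2 := by
      have hr : r = q + (r - q) := by abel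
      calc ‖r‖ ^ 2 = ‖q + (r - q)‖ ^ 2 := by rw [← hr]
        _ = _ := norm_add_sq_real q (r - q)
    rw [e1, e2]
    linarith [sq_nonneg ‖Pi (v - uh)‖, mul_nonneg hα.le (sq_nonneg ‖r - q‖), hA]
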